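/- arXiv:1005.3082 — 2 statements merged into one kernel-verified Lean document; each statement's English description precedes it below -/
import Mathlib

section
/- Let k be an algebraically closed field and let C ⊆ k^n be a Zariski-closed cone (i.e. λ c ∈ C for all λ ∈ k and c ∈ C) such that C meets the last coordinate axis { (0, …, 0, λ) : λ ∈ k } only in the origin. Let φ : k^n → k^{n−1} be the projection onto the first n − 1 coordinates. Then for every Zariski-closed subset V ⊆ C, the image φ(V) is Zariski-closed in k^{n−1}. -/
/-!
STATEMENT 5: Let `C ⊆ k^{n+1}` (`k` algebraically closed) be a Zariski-closed cone
meeting the last coordinate axis only in the origin.  Then the projection onto the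
first `n` coordinates maps every Zariski-closed subset of `C` to a Zariski-closed
subset of `k^n`.
-/

open MvPolynomial

/-- A subset of affine space `ι → k` is Zariski-closed if it is the common zero locus
of a set of polynomials in the coordinates. -/
def ZariskiClosed {k : Type*} [CommRing k] {ι : Type*} (S : Set (ι → k)) : Prop :=
  ∃ I : Set (MvPolynomial ι k), S = {x | ∀ f ∈ I, MvPolynomial.eval x f = 0}


lemma aux_eval_smul {R σ : Type*} [CommSemiring R] {g : MvPolynomial σ R} {d : ℕ}
    (hg : g.IsHomogeneous d) (lam : R) (c : σ → R) :
    eval (lam • c) g = lam ^ d * eval c g := by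
  rw [eval_eq, eval_eq, Finset.mul_sum]
  refine Finset.sum_congr rfl fun s hs => ?_
  have hd : (∑ i ∈ s.support, s i) = d := by
    have := hg (mem_support_iff.mp hs)
    simp only [Finsupp.weight_apply, Pi.one_apply, smul_eq_mul, mul_one, Finsupp.sum] at this
    simpa [Finsupp.degree] using this
  have : (∏ i ∈ s.support, (lam • c) i ^ s i)
      = lam ^ d * ∏ i ∈ s.support, c i ^ s i := by
    simp only [Pi.smul_apply, smul_eq_mul, mul_pow]
    rw [Finset.prod_mul_distrib, Finset.prod_pow_eq_pow_sum]
    rw [hd]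
  rw [this]; ring

/-- If `C` is a cone and `f` vanishes on `C`, so does each homogeneous component. -/
lemma aux_component {k σ : Type*} [Field k] [Infinite k] {C : Set (σ → k)}
    (hcone : ∀ (lam : k), ∀ c ∈ C, lam • c ∈ C)
    {f : MvPolynomial σ k} (hf : ∀ c ∈ C, eval c f = 0) (i : ℕ) :
    ∀ c ∈ C, eval c (homogeneousComponent i f) = 0 := by
  intro c hc
  rcases le_or_gt i f.totalDegree with hi | hi
  · set N := f.totalDegree + 1 with hN
    set P : Polynomial k := ∑ j ∈ Finset.range N,
      Polynomial.monomial j (eval c (homogeneousComponent j f)) with hP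
    have hPeval : ∀ lam : k, P.eval lam = 0 := by
      intro lam
      have h1 : P.eval lam = eval (lam • c) f := by
        conv_rhs => rw [← f.sum_homogeneousComponent]
        rw [map_sum, hP, Polynomial.eval_finset_sum]
        refine Finset.sum_congr rfl fun j _ => ?_
        rw [Polynomial.eval_monomial,
          aux_eval_smul (homogeneousComponent_isHomogeneous j f) lam c]
        ring
      rw [h1]
      exact hf _ (hcone lam c hc)
    have hP0 : P = 0 := Polynomial.funext (by simp [hPeval])
    have := congrArg (fun q => Polynomial.coeff q i) hP0
    simpa [hP, Polynomial.coeff_monomial, Finset.sum_ite_eq,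
      Finset.mem_range, Nat.lt_succ_iff, hi, hN, Nat.lt_add_one_iff] using this
  · rw [homogeneousComponent_eq_zero _ _ hi, map_zero]

/-- A polynomial homogeneous of degree `0` is a constant. -/
lemma aux_homog0 {R σ : Type*} [CommSemiring R] {q : MvPolynomial σ R}
    (h : q.IsHomogeneous 0) : q = C (coeff 0 q) := by
  classical
  ext m
  rcases eq_or_ne m 0 with rfl | hm
  · simp
  · rw [h.coeff_eq_zero (by simpa [Finsupp.degree_eq_zero_iff] using hm), coeff_C,
      if_neg (by simpa using (Ne.symm hm))]

/-- Evaluation of a homogeneous polynomial at the last-axis unit vector is the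
coefficient of `X_last ^ d`. -/
lemma aux_eval_axis {k : Type*} [CommRing k] {n : ℕ} {g : MvPolynomial (Fin (n + 1)) k} {d : ℕ}
    (hg : g.IsHomogeneous d) :
    eval (fun j => if j = Fin.last n then (1 : k) else 0) g
      = coeff (Finsupp.single (Fin.last n) d) g := by
  rw [eval_eq]
  rw [Finset.sum_eq_single (Finsupp.single (Fin.last n) d)]
  · rcases eq_or_ne d 0 with rfl | hd
    · simp
    · rw [Finsupp.support_single_ne_zero _ hd]
      simp
  · intro s hs hne
    by_cases hsub : ∀ i ∈ s.support, i = Fin.last n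
    · exfalso
      apply hne
      have hsupp : s.support ⊆ {Fin.last n} := fun i hi => by
        simpa using hsub i hi
      have hdeg : (∑ i ∈ s.support, s i) = d := by
        have := hg (mem_support_iff.mp hs)
        simp only [Finsupp.weight_apply, Pi.one_apply, smul_eq_mul, mul_one, Finsupp.sum] at this
        simpa [Finsupp.degree] using this
      ext j
      rcases eq_or_ne j (Fin.last n) with rfl | hj
      · rw [Finsupp.single_eq_same, ← hdeg]
        rcases Finset.subset_singleton_iff.mp hsupp with h0 | h0
        · simp [Finsupp.support_eq_empty.mp h0]
        · simp [h0]
      · rw [Finsupp.single_eq_of_ne' (Ne.symm hj)]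
        by_contra hj0
        exact hj (hsub j (Finsupp.mem_support_iff.mpr fun h => hj0 (by simp [h])))
    · push_neg at hsub
      obtain ⟨i, hi, hine⟩ := hsub
      rw [Finset.prod_eq_zero hi, mul_zero]
      rw [if_neg hine]
      exact zero_pow (Finsupp.mem_support_iff.mp hi)
  · intro h
    simp only [mem_support_iff, not_not] at h
    rw [h, zero_mul]

theorem statement5 (k : Type*) [Field k] [IsAlgClosed k] (n : ℕ)
    (C : Set (Fin (n + 1) → k)) (hCclosed : ZariskiClosed C)
    -- `C` is a cone
    (hcone : ∀ (lam : k), ∀ c ∈ C, lam • c ∈ C)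
    -- `C` meets the last coordinate axis `{(0, …, 0, λ)}` only in the origin
    (haxis : C ∩ {x : Fin (n + 1) → k | ∀ i : Fin n, x i.castSucc = 0} ⊆ {0}) :
    ∀ V ⊆ C, ZariskiClosed V →
      ZariskiClosed ((fun (x : Fin (n + 1) → k) (i : Fin n) => x i.castSucc) '' V) := by
  classical
  intro V hVC hVcl
  obtain ⟨I0, hI0⟩ := hVcl
  set J : Ideal (MvPolynomial (Fin (n + 1)) k) := vanishingIdeal k V with hJdef
  have hVspan : V = zeroLocus k (Ideal.span I0) := by rw [zeroLocus_span]; exact hI0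
  have hVz : V = zeroLocus k J := by
    refine le_antisymm (zeroLocus_vanishingIdeal_le V) ?_
    have h1 : Ideal.span I0 ≤ J := by
      rw [hJdef]
      conv_rhs => rw [hVspan]
      exact le_vanishingIdeal_zeroLocus _
    calc zeroLocus k J ≤ zeroLocus k (Ideal.span I0) := zeroLocus_anti_mono h1
      _ = V := hVspan.symm
  obtain ⟨IC, hIC⟩ := hCclosed
  set e : Fin (n + 1) → k := fun j => if j = Fin.last n then (1 : k) else 0 with he
  have heC : e ∉ C := by
    intro heC
    have h0 : e ∈ ({0} : Set (Fin (n + 1) → k)) := haxis ⟨heC, fun i => by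
      simp [he, (Fin.castSucc_lt_last i).ne]⟩
    have h1 := congrFun (Set.mem_singleton_iff.mp h0) (Fin.last n)
    simp [he] at h1
  obtain ⟨f0, hf0IC, hf0e⟩ : ∃ f0 ∈ IC, eval e f0 ≠ 0 := by
    by_contra h; push_neg at h
    exact heC (by rw [hIC]; exact h)
  have hf0C : ∀ c ∈ C, eval c f0 = 0 := fun c hc => by
    rw [hIC] at hc; exact hc f0 hf0IC
  obtain ⟨d, hd⟩ : ∃ d, eval e (homogeneousComponent d f0) ≠ 0 := by
    by_contra h; push_neg at h
    apply hf0e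
    conv_lhs => rw [← f0.sum_homogeneousComponent]
    rw [map_sum]
    exact Finset.sum_eq_zero fun j _ => h j
  set g := homogeneousComponent d f0 with hgdef
  have hghom : g.IsHomogeneous d := homogeneousComponent_isHomogeneous d f0
  have hgJ : g ∈ J := by
    rw [hJdef, mem_vanishingIdeal_iff]
    intro x hx
    exact aux_component hcone hf0C d x (hVC hx)
  set c : k := coeff (Finsupp.single (Fin.last n) d) g with hcdef
  have hcne : c ≠ 0 := by
    rw [hcdef, ← aux_eval_axis hghom]
    exact hd
  -- algebraic setup
  set mkJ : MvPolynomial (Fin (n + 1)) k →+* MvPolynomial (Fin (n + 1)) k ⧸ J :=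
    Ideal.Quotient.mk J with hmkJ
  set f : MvPolynomial (Fin n) k →+* MvPolynomial (Fin (n + 1)) k ⧸ J :=
    mkJ.comp (rename Fin.castSucc).toRingHom with hf
  set xl : MvPolynomial (Fin (n + 1)) k ⧸ J := mkJ (X (Fin.last n)) with hxldef
  set ρ : Equiv.Perm (Fin (n + 1)) := finRotate (n + 1) with hρ
  set E : MvPolynomial (Fin (n + 1)) k →+* Polynomial (MvPolynomial (Fin n) k) :=
    (finSuccEquiv k n).toAlgHom.toRingHom.comp (rename (ρ : Fin (n + 1) → Fin (n + 1))).toRingHom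
    with hE
  have hEmk : (Polynomial.eval₂RingHom f xl).comp E = mkJ := by
    apply MvPolynomial.ringHom_ext
    · intro a
      simp [hE, hf, finSuccEquiv_apply]
    · intro j
      refine Fin.lastCases ?_ ?_ j
      · have h1 : ρ (Fin.last n) = 0 := finRotate_last
        simp [hE, hf, rename_X, h1, finSuccEquiv_X_zero, hxldef]
      · intro i
        have h1 : ρ i.castSucc = i.succ := by
          rw [hρ, finRotate_succ_apply, Fin.coeSucc_eq_succ]
        simp [hE, hf, rename_X, h1, finSuccEquiv_X_succ]
  set p : Polynomial (MvPolynomial (Fin n) k) := E g with hpdef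
  have hpeq : p = finSuccEquiv k n (rename (ρ : Fin (n + 1) → Fin (n + 1)) g) := rfl
  have hg' : (rename (ρ : Fin (n + 1) → Fin (n + 1)) g).IsHomogeneous d :=
    hghom.rename_isHomogeneous
  have hp1 : p.coeff d = MvPolynomial.C c := by
    have hh : (p.coeff d).IsHomogeneous 0 := by
      have := hg'.finSuccEquiv_coeff_isHomogeneous d 0 (by omega)
      rwa [hpeq]
    rw [aux_homog0 hh]
    congr 1
    have h2 : coeff (0 : Fin n →₀ ℕ) (p.coeff d)
        = coeff ((0 : Fin n →₀ ℕ).cons d) (rename (ρ : Fin (n + 1) → Fin (n + 1)) g) := by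
      rw [hpeq]; exact finSuccEquiv_coeff_coeff _ _ _
    have hcons : ((0 : Fin n →₀ ℕ).cons d) = Finsupp.single (0 : Fin (n + 1)) d := by
      ext j
      refine Fin.cases ?_ ?_ j
      · simp
      · intro i
        simp [Finsupp.cons_succ, Finsupp.single_apply, (Fin.succ_ne_zero i).symm]
    have hsingle : Finsupp.single (0 : Fin (n + 1)) d
        = Finsupp.mapDomain (ρ : Fin (n + 1) → Fin (n + 1)) (Finsupp.single (Fin.last n) d) := by
      rw [Finsupp.mapDomain_single]
      congr 1
      exact (finRotate_last).symm
    rw [h2, hcons, hsingle, coeff_rename_mapDomain _ ρ.injective]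
  have hp2 : p.natDegree ≤ d := by
    have h3 : p.natDegree = degreeOf 0 (rename (ρ : Fin (n + 1) → Fin (n + 1)) g) := by
      rw [hpeq]; exact natDegree_finSuccEquiv _
    rw [h3]
    refine le_trans (degreeOf_le_totalDegree _ _) ?_
    rcases eq_or_ne (rename (ρ : Fin (n + 1) → Fin (n + 1)) g) 0 with h4 | h4
    · simp [h4]
    · exact le_of_eq (hg'.totalDegree h4)
  set q : Polynomial (MvPolynomial (Fin n) k) := Polynomial.C (MvPolynomial.C c⁻¹) * p with hqdef
  have hqmonic : q.Monic := by
    apply Polynomial.monic_of_natDegree_le_of_coeff_eq_one d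
    · exact le_trans (Polynomial.natDegree_C_mul_le _ _) hp2
    · rw [hqdef, Polynomial.coeff_C_mul, hp1, ← map_mul, inv_mul_cancel₀ hcne, map_one]
  have hpg : Polynomial.eval₂ f xl p = 0 := by
    have h5 := RingHom.congr_fun hEmk g
    have hmk : mkJ g = 0 := Ideal.Quotient.eq_zero_iff_mem.mpr hgJ
    simpa [hpdef, hmk] using h5
  letI : Algebra (MvPolynomial (Fin n) k) (MvPolynomial (Fin (n + 1)) k ⧸ J) := f.toAlgebra
  have halg : algebraMap (MvPolynomial (Fin n) k) (MvPolynomial (Fin (n + 1)) k ⧸ J) = f := rfl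
  have hxl : IsIntegral (MvPolynomial (Fin n) k) xl := by
    refine ⟨q, hqmonic, ?_⟩
    rw [halg, hqdef, Polynomial.eval₂_mul, Polynomial.eval₂_C, hpg, mul_zero]
  have hadj : ∀ s, mkJ s ∈ Algebra.adjoin (MvPolynomial (Fin n) k) ({xl} : Set _) := by
    intro s
    induction s using MvPolynomial.induction_on with
    | C a =>
        have h6 : mkJ (MvPolynomial.C a) = algebraMap (MvPolynomial (Fin n) k) _
            (MvPolynomial.C a) := by
          rw [halg, hf]; simp
        rw [h6]; exact Subalgebra.algebraMap_mem _ _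
    | add r s hr hs => rw [RingHom.map_add]; exact add_mem hr hs
    | mul_X r j hr =>
        rw [RingHom.map_mul]
        refine mul_mem hr ?_
        refine Fin.lastCases ?_ ?_ j
        · exact Algebra.subset_adjoin rfl
        · intro i
          have h7 : mkJ (X i.castSucc) = algebraMap (MvPolynomial (Fin n) k) _
              (X i : MvPolynomial (Fin n) k) := by
            rw [halg, hf]; simp
          rw [h7]; exact Subalgebra.algebraMap_mem _ _
  haveI hAint : Algebra.IsIntegral (MvPolynomial (Fin n) k)
      (MvPolynomial (Fin (n + 1)) k ⧸ J) := by
    refine ⟨fun a => ?_⟩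
    obtain ⟨s, rfl⟩ := Ideal.Quotient.mk_surjective a
    exact IsIntegral.of_mem_of_fg _ hxl.fg_adjoin_singleton _ (hadj s)
  set J' : Ideal (MvPolynomial (Fin n) k) := J.comap (rename Fin.castSucc).toRingHom with hJ'
  refine ⟨(J' : Set (MvPolynomial (Fin n) k)), ?_⟩
  apply Set.eq_of_subset_of_subset
  · rintro _ ⟨x, hxV, rfl⟩ t ht
    have h8 : rename Fin.castSucc t ∈ J := ht
    rw [hJdef, mem_vanishingIdeal_iff] at h8
    have h9 := h8 x hxV
    rwa [aeval_rename] at h9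
  · intro y hy
    set m : Ideal (MvPolynomial (Fin n) k) := vanishingIdeal k {y} with hm
    haveI hmmax : m.IsMaximal := (isMaximal_iff_eq_vanishingIdeal_singleton (I := m)).mpr ⟨y, rfl⟩
    have hker : RingHom.ker (algebraMap (MvPolynomial (Fin n) k)
        (MvPolynomial (Fin (n + 1)) k ⧸ J)) ≤ m := by
      intro t ht
      rw [RingHom.mem_ker, halg] at ht
      have htJ' : t ∈ J' := by
        rw [hJ', Ideal.mem_comap]
        exact Ideal.Quotient.eq_zero_iff_mem.mp ht
      rw [hm, mem_vanishingIdeal_singleton_iff]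
      exact hy t htJ'
    obtain ⟨P, hPmax, hPcomap⟩ := Ideal.exists_ideal_over_maximal_of_isIntegral m hker
    haveI := hPmax
    haveI hQmax : (P.comap mkJ).IsMaximal :=
      Ideal.comap_isMaximal_of_surjective mkJ Ideal.Quotient.mk_surjective
    obtain ⟨x, hx⟩ := (isMaximal_iff_eq_vanishingIdeal_singleton (I := P.comap mkJ)).mp hQmax
    have hxV : x ∈ V := by
      rw [hVz, mem_zeroLocus_iff]
      intro t ht
      have h10 : t ∈ P.comap mkJ := by
        rw [Ideal.mem_comap]
        have : mkJ t = 0 := Ideal.Quotient.eq_zero_iff_mem.mpr ht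
        rw [this]; exact Ideal.zero_mem P
      rw [hx, mem_vanishingIdeal_singleton_iff] at h10
      exact h10
    refine ⟨x, hxV, ?_⟩
    funext i
    have h11 : (X i - MvPolynomial.C (y i) : MvPolynomial (Fin n) k) ∈ m := by
      rw [hm, mem_vanishingIdeal_singleton_iff]; simp
    rw [← hPcomap, Ideal.mem_comap, halg] at h11
    have h12 : rename Fin.castSucc (X i - MvPolynomial.C (y i)) ∈ P.comap mkJ := by
      rw [Ideal.mem_comap]
      rw [hf] at h11
      exact h11
    rw [hx, mem_vanishingIdeal_singleton_iff] at h12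
    rw [aeval_rename] at h12
    simpa [sub_eq_zero] using h12
end

section
/- Let k be an algebraically closed field and let m, n be positive integers. Then there exist functions ρ_{ij} : Mat_{m×n}(k) → k for 1 ≤ i, j ≤ n, each of whose graphs is a constructible subset of Mat_{m×n}(k) × k ≅ k^{mn+1} with respect to the Zariski topology, such that for every matrix A ∈ Mat_{m×n}(k), the n×n matrix R(A) = (ρ_{ij}(A)) satisfies: (i) for every j, ρ_{jj}(A) is 0 or 1; (ii) if ρ_{jj}(A) = 0 then the entire j-th row of R(A) is zero; (iii) if ρ_{jj}(A) = 1 then ρ_{ji}(A) = 0 for all i < j; (iv) if ρ_{jj}(A) = 1 then ρ_{ij}(A) = 0 for all i ≠ j; and (v) the rows of R(A) span the same subspace of k^n as the rows of A. -/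
/-!
STATEMENT 11: Over an algebraically closed field `k`, there are functions
`ρ_{ij} : Mat_{m×n}(k) → k` (`1 ≤ i, j ≤ n`) with Zariski-constructible graphs in
`k^{mn+1}` such that for every `A ∈ Mat_{m×n}(k)` the matrix `R(A) = (ρ_{ij}(A))` is a
"triangular reduced row echelon form" of `A`: conditions (i)–(iv) below hold, and the
rows of `R(A)` span the same subspace of `k^n` as the rows of `A`.
Here `Mat_{m×n}(k)` is identified with `k^{mn}` via the index type `Fin m × Fin n`,
and `k^{mn} × k ≅ k^{mn+1}` via the index type `Option (Fin m × Fin n)`.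
-/

open MvPolynomial
open Matrix Submodule Set Module

/-- A subset of affine space is Zariski-open if its complement is Zariski-closed. -/
def ZariskiOpen {k : Type*} [CommRing k] {ι : Type*} (S : Set (ι → k)) : Prop :=
  ZariskiClosed Sᶜ

/-- A subset of affine space is constructible (for the Zariski topology) if it is a
finite union of sets of the form `U ∩ Z` with `U` Zariski-open and `Z` Zariski-closed. -/
def ZariskiConstructible {k : Type*} [CommRing k] {ι : Type*} (S : Set (ι → k)) : Prop :=
  ∃ (t : ℕ) (U Z : Fin t → Set (ι → k)),
    (∀ i, ZariskiOpen (U i)) ∧ (∀ i, ZariskiClosed (Z i)) ∧ S = ⋃ i, U i ∩ Z i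


section Statement11Aux

variable {k : Type*} [Field k] {m n r : ℕ}

lemma key_li_minor {ι : Type*} [Fintype ι] [DecidableEq ι] {q : ℕ} {v : Fin q → ι → k}
    (hv : LinearIndependent k v) :
    ∃ g : Fin q → ι, (Matrix.of fun a b => v a (g b)).det ≠ 0 := by
  classical
  set V : Matrix (Fin q) ι k := Matrix.of fun a x => v a x with hV
  have hrankT : Vᵀ.rank = q := by
    have : (Vᵀ)ᵀ.rank = q := by
      rw [Matrix.transpose_transpose]
      simpa using hv.rank_matrix (M := V)
    rwa [Matrix.rank_transpose] at this
  have hspan : Submodule.span k (Set.range Vᵀ) = ⊤ := by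
    have h1 : finrank k (Submodule.span k (Set.range Vᵀ)) = q := by
      have h0 := Matrix.rank_eq_finrank_span_row Vᵀ
      rw [hrankT] at h0
      exact h0.symm
    apply Submodule.eq_top_of_finrank_eq
    rw [h1, Module.finrank_pi]; simp
  obtain ⟨b, hbsub, hbspan, hbli⟩ := exists_linearIndependent k (Set.range Vᵀ)
  have hbfin : b.Finite := (Set.finite_range Vᵀ).subset hbsub
  have := hbfin.fintype
  have hcard : Fintype.card b = q := by
    have h1 : finrank k (Submodule.span k b) = q := by
      rw [hbspan, hspan, finrank_top, Module.finrank_pi]; simp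
    rw [← Set.toFinset_card, ← finrank_span_set_eq_card hbli, h1]
  let e : Fin q ≃ b := (Fintype.equivFinOfCardEq hcard).symm
  have hpre : ∀ c : Fin q, ∃ x : ι, Vᵀ x = (e c : Fin q → k) := fun c => hbsub (e c).2
  choose g hg using hpre
  refine ⟨g, fun hdet => ?_⟩
  obtain ⟨c, hc0, hcne⟩ := Matrix.exists_mulVec_eq_zero_iff.mpr hdet
  have hli2 : LinearIndependent k (fun c : Fin q => (e c : Fin q → k)) :=
    hbli.comp _ e.injective
  rw [Fintype.linearIndependent_iff] at hli2
  apply hc0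
  funext a
  refine hli2 c ?_ a
  funext x
  have h2 := congrFun hcne x
  have h3 : ∀ b' : Fin q, (e b' : Fin q → k) x = v x (g b') := by
    intro b'
    rw [← hg b']; rfl
  simpa [Matrix.mulVec, dotProduct, h3, mul_comm,
    Finset.sum_apply] using h2

lemma key_span_minor {ι : Type*} [Fintype ι] [DecidableEq ι] {p q : ℕ} (hpq : p < q)
    (v : Fin p → ι → k) (w : Fin q → ι → k)
    (hw : ∀ a, w a ∈ Submodule.span k (Set.range v)) (g : Fin q → ι) :
    (Matrix.of fun a b => w a (g b)).det = 0 := by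
  classical
  have hdep : ¬ LinearIndependent k w := by
    intro hli
    have h1 : finrank k (Submodule.span k (Set.range w)) = q := by
      rw [finrank_span_eq_card hli]; simp
    have h2 : Submodule.span k (Set.range w) ≤ Submodule.span k (Set.range v) :=
      Submodule.span_le.mpr (Set.range_subset_iff.mpr hw)
    have h3 : finrank k (Submodule.span k (Set.range w)) ≤
        finrank k (Submodule.span k (Set.range v)) :=
      Submodule.finrank_mono h2
    have h4 : finrank k (Submodule.span k (Set.range v)) ≤ p := by
      refine le_trans (finrank_span_le_card (R := k) (Set.range v)) ?_
      rw [Set.toFinset_range]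
      exact le_trans (Finset.card_image_le) (by simp)
    omega
  rw [Fintype.not_linearIndependent_iff] at hdep
  obtain ⟨c, hc, a0, ha0⟩ := hdep
  rw [← Matrix.det_transpose]
  apply Matrix.exists_mulVec_eq_zero_iff.mp
  refine ⟨c, fun h0 => ha0 (by rw [h0]; rfl), ?_⟩
  funext x
  have h2 := congrFun hc (g x)
  simpa [Matrix.mulVec, dotProduct, mul_comm, Finset.sum_apply] using h2

def Arow (A : Fin m × Fin n → k) (i : Fin m) : Fin n → k := fun j => A (i, j)

def pivM (A : Fin m × Fin n → k) (I : Fin r → Fin m) (P : Fin r → Fin n) :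
    Matrix (Fin r) (Fin r) k := Matrix.of fun a b => A (I a, P b)

noncomputable def Bmat (A : Fin m × Fin n → k) (I : Fin r → Fin m) (P : Fin r → Fin n) :
    Matrix (Fin r) (Fin n) k := (pivM A I P)⁻¹ * (Matrix.of fun a j => A (I a, j))

def pcount (P : Fin r → Fin n) (j : Fin n) : ℕ :=
  (Finset.univ.filter (fun t => P t ≤ j)).card

def Cond (A : Fin m × Fin n → k) (I : Fin r → Fin m) (P : Fin r → Fin n) : Prop :=
  (pivM A I P).det ≠ 0 ∧
  (∀ (f : Fin (r+1) → Fin m) (g : Fin (r+1) → Fin n),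
      (Matrix.of fun a b => A (f a, g b)).det = 0) ∧
  (∀ j : Fin n, j ∉ Set.range P →
    ∀ (f : Fin (pcount P j + 1) → Fin m) (g : Fin (pcount P j + 1) → Fin n),
      (∀ b, g b ≤ j) → (Matrix.of fun a b => A (f a, g b)).det = 0)

noncomputable def Rmat (A : Fin m × Fin n → k) (I : Fin r → Fin m) (P : Fin r → Fin n) :
    Fin n → Fin n → k :=
  fun i j => if h : ∃ t, P t = i then Bmat A I P h.choose j else 0

variable {A : Fin m × Fin n → k} {I : Fin r → Fin m} {P : Fin r → Fin n}

lemma Cond.pinj (hC : Cond A I P) : Function.Injective P := by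
  intro b b' hbb'
  by_contra hne
  exact hC.1 (Matrix.det_zero_of_column_eq hne (fun a => by simp [pivM, hbb']))

lemma Cond.rowsI_li (hC : Cond A I P) : LinearIndependent k (fun a => Arow A (I a)) := by
  classical
  rw [Fintype.linearIndependent_iff]
  intro c hc a
  by_contra ha
  have hdet : (pivM A I P)ᵀ.det = 0 := by
    apply Matrix.exists_mulVec_eq_zero_iff.mp
    refine ⟨c, fun h0 => ha (by rw [h0]; rfl), ?_⟩
    funext b
    have := congrFun hc (P b)
    simpa [Matrix.mulVec, dotProduct, pivM, Arow, mul_comm, Finset.sum_apply] using this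
  rw [Matrix.det_transpose] at hdet
  exact hC.1 hdet

lemma Cond.row_mem_span (hC : Cond A I P) (i : Fin m) :
    Arow A i ∈ Submodule.span k (Set.range fun a => Arow A (I a)) := by
  classical
  by_contra hmem
  set v : Fin (r+1) → Fin n → k := Fin.snoc (fun a => Arow A (I a)) (Arow A i) with hv
  have hli : LinearIndependent k v := by
    rw [Fintype.linearIndependent_iff]
    intro c hc
    have hcl : c (Fin.last r) = 0 := by
      by_contra hcl
      apply hmem
      rw [mem_span_range_iff_exists_fun]
      refine ⟨fun a => -(c a.castSucc) / c (Fin.last r), ?_⟩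
      rw [Fin.sum_univ_castSucc] at hc
      have h2 : ∀ a : Fin r, v a.castSucc = Arow A (I a) := fun a => by
        simp [hv, Fin.snoc_castSucc]
      have h3 : v (Fin.last r) = Arow A i := by simp [hv]
      funext j
      have := congrFun hc j
      simp only [h2, h3, Finset.sum_apply, Pi.add_apply, Pi.smul_apply, smul_eq_mul,
        Pi.zero_apply] at this ⊢
      have hsum : ∑ x : Fin r, c x.castSucc * Arow A (I x) j
          = -(c (Fin.last r) * Arow A i j) := by linear_combination this
      simp only [neg_div, neg_mul, div_mul_eq_mul_div]
      simp only [← neg_div]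
      rw [← Finset.sum_div, Finset.sum_neg_distrib, hsum, neg_neg,
        mul_div_cancel_left₀ _ hcl]
    have hrest : ∀ a : Fin r, c a.castSucc = 0 := by
      have hli' := hC.rowsI_li
      rw [Fintype.linearIndependent_iff] at hli'
      apply hli'
      rw [Fin.sum_univ_castSucc, hcl] at hc
      simpa [hv, Fin.snoc_castSucc] using hc
    intro a
    refine Fin.lastCases hcl (fun a' => hrest a') a
  obtain ⟨g, hg⟩ := key_li_minor hli
  apply hg
  set f : Fin (r+1) → Fin m := Fin.snoc I i with hf
  have h4 : ∀ a b, v a (g b) = A (f a, g b) := by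
    intro a b
    refine Fin.lastCases ?_ (fun a' => ?_) a <;> simp [hv, hf, Arow]
  have := hC.2.1 f g
  rw [← this]
  congr 1
  ext a b
  exact h4 a b

lemma Cond.B_pivot (hC : Cond A I P) (t u : Fin r) :
    Bmat A I P t (P u) = if t = u then 1 else 0 := by
  have h1 : (pivM A I P)⁻¹ * pivM A I P = 1 :=
    Matrix.nonsing_inv_mul _ (isUnit_iff_ne_zero.mpr hC.1)
  have h2 : Bmat A I P t (P u) = ((pivM A I P)⁻¹ * pivM A I P) t u := by
    simp [Bmat, Matrix.mul_apply, pivM]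
  rw [h2, h1, Matrix.one_apply]

lemma Cond.B_row_mem (hC : Cond A I P) (t : Fin r) :
    Bmat A I P t ∈ Submodule.span k (Set.range fun a => Arow A (I a)) := by
  rw [mem_span_range_iff_exists_fun]
  refine ⟨fun a => (pivM A I P)⁻¹ t a, ?_⟩
  funext j
  simp [Bmat, Matrix.mul_apply, Arow, Finset.sum_apply]

lemma Cond.rowI_mem_spanB (hC : Cond A I P) (a : Fin r) :
    Arow A (I a) ∈ Submodule.span k (Set.range (Bmat A I P)) := by
  have h1 : pivM A I P * Bmat A I P = Matrix.of fun a j => A (I a, j) := by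
    rw [Bmat, ← Matrix.mul_assoc, Matrix.mul_nonsing_inv _ (isUnit_iff_ne_zero.mpr hC.1),
      Matrix.one_mul]
  change Arow A (I a) ∈ Submodule.span k (Set.range fun t => Bmat A I P t)
  rw [mem_span_range_iff_exists_fun]
  refine ⟨fun t => pivM A I P a t, ?_⟩
  funext j
  have := congrFun (congrFun h1 a) j
  simpa [Matrix.mul_apply, Arow, Finset.sum_apply] using this

lemma Cond.pivot_inj (hC : Cond A I P) {w : Fin n → k}
    (hw : w ∈ Submodule.span k (Set.range fun a => Arow A (I a)))
    (hz : ∀ t, w (P t) = 0) : w = 0 := by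
  classical
  rw [mem_span_range_iff_exists_fun] at hw
  obtain ⟨c, hc⟩ := hw
  have hc0 : c = 0 := by
    by_contra hne
    have hdet : (pivM A I P)ᵀ.det = 0 := by
      apply Matrix.exists_mulVec_eq_zero_iff.mp
      refine ⟨c, hne, ?_⟩
      funext t
      have := congrFun hc (P t) |>.trans (hz t)
      simpa [Matrix.mulVec, dotProduct, pivM, Arow, mul_comm, Finset.sum_apply] using this
    rw [Matrix.det_transpose] at hdet
    exact hC.1 hdet
  rw [← hc, hc0]
  simp

/-- Truncation to coordinates `≤ j`. -/
def trunc (j : Fin n) : (Fin n → k) →ₗ[k] (Fin n → k) where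
  toFun w := fun x => if x ≤ j then w x else 0
  map_add' w w' := by funext x; by_cases h : x ≤ j <;> simp [h]
  map_smul' c w := by funext x; by_cases h : x ≤ j <;> simp [h]

@[simp] lemma trunc_apply (j : Fin n) (w : Fin n → k) (x : Fin n) :
    trunc j w x = if x ≤ j then w x else 0 := rfl

lemma Cond.span_rows_eq (hC : Cond A I P) :
    Submodule.span k (Set.range fun a => Arow A (I a)) =
      Submodule.span k (Set.range fun i => Arow A i) := by
  apply le_antisymm
  · exact Submodule.span_le.mpr (Set.range_subset_iff.mpr fun a => subset_span ⟨I a, rfl⟩)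
  · exact Submodule.span_le.mpr (Set.range_subset_iff.mpr fun i => hC.row_mem_span i)

lemma Cond.spanB_eq (hC : Cond A I P) :
    Submodule.span k (Set.range (Bmat A I P)) =
      Submodule.span k (Set.range fun i => Arow A i) := by
  apply le_antisymm
  · refine Submodule.span_le.mpr (Set.range_subset_iff.mpr fun t => ?_)
    rw [← hC.span_rows_eq]; exact hC.B_row_mem t
  · refine Submodule.span_le.mpr (Set.range_subset_iff.mpr fun i => ?_)
    have h1 := hC.row_mem_span i
    have h2 : Submodule.span k (Set.range fun a => Arow A (I a)) ≤
        Submodule.span k (Set.range (Bmat A I P)) :=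
      Submodule.span_le.mpr (Set.range_subset_iff.mpr fun a => hC.rowI_mem_spanB a)
    exact h2 h1

lemma Cond.B_echelon (hC : Cond A I P) (t : Fin r) (j : Fin n) (hj : j < P t) :
    Bmat A I P t j = 0 := by
  classical
  by_cases hjP : j ∈ Set.range P
  · obtain ⟨u, rfl⟩ := hjP
    have : t ≠ u := fun h => absurd hj (by rw [h]; exact lt_irrefl _)
    rw [hC.B_pivot t u, if_neg this]
  · -- j is not a pivot column
    set s := pcount P j with hs
    set Tv : Fin r → (Fin n → k) := fun a => trunc j (Arow A (I a)) with hTv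
    -- (a) the truncated row space has dimension ≤ s
    have hfr : finrank k (Submodule.span k (Set.range Tv)) ≤ s := by
      by_contra hgt
      push_neg at hgt
      obtain ⟨b, hbsub, hbspan, hbli⟩ := exists_linearIndependent k (Set.range Tv)
      have hbfin : b.Finite := (Set.finite_range Tv).subset hbsub
      have := hbfin.fintype
      have hcard : s + 1 ≤ Fintype.card b := by
        rw [← Set.toFinset_card, ← finrank_span_set_eq_card hbli, hbspan]
        omega
      let emb : Fin (s+1) ↪ b :=
        (Fin.castLEEmb hcard).trans (Fintype.equivFin b).symm.toEmbedding
      have hw'li : LinearIndependent k (fun a : Fin (s+1) => (emb a : Fin n → k)) :=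
        hbli.comp _ emb.injective
      have hpre : ∀ a : Fin (s+1), ∃ a' : Fin r, Tv a' = (emb a : Fin n → k) :=
        fun a => hbsub (emb a).2
      choose f hf using hpre
      obtain ⟨g, hg⟩ := key_li_minor hw'li
      have hgle : ∀ b', g b' ≤ j := by
        by_contra hb0
        push_neg at hb0
        obtain ⟨b0, hb0⟩ := hb0
        apply hg
        apply Matrix.det_eq_zero_of_column_eq_zero b0
        intro a
        have : (emb a : Fin n → k) (g b0) = 0 := by
          rw [← hf a, hTv]
          simp [not_le.mpr hb0]
        simpa using this
      apply hg
      have h4 : ∀ a b', (emb a : Fin n → k) (g b') = A (I (f a), g b') := by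
        intro a b'
        rw [← hf a, hTv]
        simp [hgle b', Arow]
      have := hC.2.2 j hjP (fun a => I (f a)) g hgle
      rw [← this]
      congr 1
      ext a b'
      exact h4 a b'
    -- (b) the truncated pivot rows are independent
    set TB : {u : Fin r // P u ≤ j} → (Fin n → k) := fun u => trunc j (Bmat A I P u) with hTB
    have hTBpiv : ∀ (u : {u : Fin r // P u ≤ j}) (u' : Fin r),
        P u' ≤ j → TB u (P u') = if (u : Fin r) = u' then 1 else 0 := by
      intro u u' hu'
      rw [hTB]
      simp only [trunc_apply, if_pos hu']
      exact hC.B_pivot u u'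
    have hTBli : LinearIndependent k TB := by
      rw [Fintype.linearIndependent_iff]
      intro c hc u
      have := congrFun hc (P u)
      simp only [Finset.sum_apply, Pi.smul_apply, smul_eq_mul, Pi.zero_apply] at this
      rw [Finset.sum_eq_single u] at this
      · rw [hTBpiv u u u.2, if_pos rfl, mul_one] at this
        exact this
      · intro u' _ hne
        rw [hTBpiv u' u u.2, if_neg (fun h => hne (Subtype.ext h)), mul_zero]
      · intro h; exact absurd (Finset.mem_univ u) h
    -- (c) they span the truncated row space
    have hcardTB : Fintype.card {u : Fin r // P u ≤ j} = s := by
      rw [hs, pcount, Fintype.card_subtype]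
    have hle1 : Submodule.span k (Set.range TB) ≤
        (Submodule.span k (Set.range fun a => Arow A (I a))).map (trunc j) := by
      refine Submodule.span_le.mpr (Set.range_subset_iff.mpr fun u => ?_)
      exact ⟨Bmat A I P u, hC.B_row_mem u, rfl⟩
    have hmapspan : (Submodule.span k (Set.range fun a => Arow A (I a))).map (trunc j) =
        Submodule.span k (Set.range Tv) := by
      rw [Submodule.map_span]
      congr 1
      rw [← Set.range_comp]
      rfl
    have heq : Submodule.span k (Set.range TB) =
        (Submodule.span k (Set.range fun a => Arow A (I a))).map (trunc j) := by
      apply Submodule.eq_of_le_of_finrank_le hle1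
      rw [hmapspan]
      refine le_trans hfr ?_
      rw [finrank_span_eq_card hTBli, hcardTB]
    -- (d) conclude
    have hmem : trunc j (Bmat A I P t) ∈ Submodule.span k (Set.range TB) := by
      rw [heq]
      exact ⟨Bmat A I P t, hC.B_row_mem t, rfl⟩
    rw [mem_span_range_iff_exists_fun] at hmem
    obtain ⟨c, hc⟩ := hmem
    have hc0 : ∀ u : {u : Fin r // P u ≤ j}, c u = 0 := by
      intro u
      have := congrFun hc (P u)
      simp only [Finset.sum_apply, Pi.smul_apply, smul_eq_mul] at this
      rw [Finset.sum_eq_single u] at this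
      · rw [hTBpiv u u u.2, if_pos rfl, mul_one] at this
        rw [this]
        have htu : t ≠ (u : Fin r) := fun h => absurd (h ▸ u.2) (not_le.mpr hj)
        simp only [trunc_apply, if_pos u.2]
        rw [hC.B_pivot t u, if_neg htu]
      · intro u' _ hne
        rw [hTBpiv u' u u.2, if_neg (fun h => hne (Subtype.ext h)), mul_zero]
      · intro h; exact absurd (Finset.mem_univ u) h
    have hz : trunc j (Bmat A I P t) = 0 := by
      rw [← hc]
      simp only [hc0, zero_smul]
      simp
    have := congrFun hz j
    simpa using this

lemma Cond.mem_rangeP_iff (hC : Cond A I P) (j : Fin n) :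
    j ∈ Set.range P ↔ ∃ w ∈ Submodule.span k (Set.range fun i => Arow A i),
      w j = 1 ∧ ∀ i < j, w i = 0 := by
  constructor
  · rintro ⟨t, rfl⟩
    refine ⟨Bmat A I P t, ?_, ?_, ?_⟩
    · rw [← hC.span_rows_eq]; exact hC.B_row_mem t
    · rw [hC.B_pivot t t, if_pos rfl]
    · intro i hi; exact hC.B_echelon t i hi
  · rintro ⟨w, hwmem, hw1, hw0⟩
    by_contra hjP
    rw [← hC.spanB_eq] at hwmem
    change w ∈ Submodule.span k (Set.range fun t => Bmat A I P t) at hwmem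
    rw [mem_span_range_iff_exists_fun] at hwmem
    obtain ⟨c, hc⟩ := hwmem
    have hterm : ∀ u : Fin r, c u * Bmat A I P u j = 0 := by
      intro u
      rcases lt_or_ge j (P u) with h | h
      · rw [hC.B_echelon u j h, mul_zero]
      · have hlt : P u < j := lt_of_le_of_ne h (fun he => hjP ⟨u, he⟩)
        have hcu : c u = 0 := by
          have := congrFun hc (P u)
          simp only [Finset.sum_apply, Pi.smul_apply, smul_eq_mul] at this
          rw [Finset.sum_eq_single u] at this
          · rw [hC.B_pivot u u, if_pos rfl, mul_one] at this
            rw [this]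
            exact hw0 _ hlt
          · intro u' _ hne
            rw [hC.B_pivot u' u, if_neg hne, mul_zero]
          · intro h'; exact absurd (Finset.mem_univ u) h'
        rw [hcu, zero_mul]
    have : w j = 0 := by
      rw [← hc]
      simp only [Finset.sum_apply, Pi.smul_apply, smul_eq_mul]
      exact Finset.sum_eq_zero fun u _ => hterm u
    rw [hw1] at this
    exact one_ne_zero this

lemma Cond.Rmat_pivot (hC : Cond A I P) (t : Fin r) (j : Fin n) :
    Rmat A I P (P t) j = Bmat A I P t j := by
  have h : ∃ t', P t' = P t := ⟨t, rfl⟩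
  rw [Rmat, dif_pos h]
  congr 1
  exact hC.pinj h.choose_spec

lemma Rmat_nonpivot {i : Fin n} (hi : i ∉ Set.range P) (j : Fin n) (A : Fin m × Fin n → k)
    (I : Fin r → Fin m) : Rmat A I P i j = 0 := by
  rw [Rmat, dif_neg]
  rintro ⟨t, ht⟩
  exact hi ⟨t, ht⟩

lemma cond_unique {r' : ℕ} {I' : Fin r' → Fin m} {P' : Fin r' → Fin n}
    (hC : Cond A I P) (hC' : Cond A I' P') : Rmat A I P = Rmat A I' P' := by
  have hrange : Set.range P = Set.range P' := by
    ext j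
    rw [hC.mem_rangeP_iff j, hC'.mem_rangeP_iff j]
  funext i j
  by_cases hi : i ∈ Set.range P
  · obtain ⟨t, rfl⟩ := hi
    have hi' : P t ∈ Set.range P' := by rw [← hrange]; exact ⟨t, rfl⟩
    obtain ⟨t', ht'⟩ := hi'
    rw [hC.Rmat_pivot t, ← ht', hC'.Rmat_pivot t']
    -- show the two B-rows agree
    set w : Fin n → k := Bmat A I P t - Bmat A I' P' t' with hw
    have hwmem : w ∈ Submodule.span k (Set.range fun a => Arow A (I a)) := by
      apply sub_mem (hC.B_row_mem t)
      rw [hC.span_rows_eq, ← hC'.span_rows_eq]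
      exact hC'.B_row_mem t'
    have hz : ∀ u, w (P u) = 0 := by
      intro u
      have hu' : P u ∈ Set.range P' := by rw [← hrange]; exact ⟨u, rfl⟩
      obtain ⟨u', hu'⟩ := hu'
      rw [hw]
      simp only [Pi.sub_apply]
      rw [hC.B_pivot t u, ← hu', hC'.B_pivot t' u']
      have : (t = u) ↔ (t' = u') := by
        constructor
        · intro h; exact hC'.pinj (by rw [ht', hu', h])
        · intro h; exact hC.pinj (by rw [← ht', ← hu', h])
      by_cases h : t = u
      · rw [if_pos h, if_pos (this.mp h), sub_self]
      · rw [if_neg h, if_neg (fun h' => h (this.mpr h')), sub_self]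
    have := hC.pivot_inj hwmem hz
    have h2 := congrFun this j
    simp only [hw, Pi.sub_apply, Pi.zero_apply] at h2
    linear_combination h2
  · have hi' : i ∉ Set.range P' := by rw [← hrange]; exact hi
    rw [Rmat_nonpivot hi, Rmat_nonpivot hi']

theorem exists_cond (A : Fin m × Fin n → k) :
    ∃ (r : ℕ) (I : Fin r → Fin m) (P : Fin r → Fin n), Cond A I P := by
  classical
  set colA : Fin n → (Fin m → k) := fun j => fun i => A (i, j) with hcolA
  set Pv : Finset (Fin n) :=
    Finset.univ.filter (fun j => colA j ∉ Submodule.span k (colA '' {x | x < j})) with hPv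
  set r := Pv.card with hr
  set iso := Pv.orderIsoOfFin rfl with hiso
  set P : Fin r → Fin n := fun t => (iso t : Fin n) with hP
  have hPmem : ∀ t, P t ∈ Pv := fun t => (iso t).2
  have hPmono : StrictMono P := fun a b hab => by
    have := iso.strictMono hab
    exact this
  have hPsurj : ∀ x ∈ Pv, ∃ t, P t = x := by
    intro x hx
    exact ⟨iso.symm ⟨x, hx⟩, by simp [hP]⟩
  have hrangeP : Set.range P = (Pv : Set (Fin n)) := by
    ext x
    constructor
    · rintro ⟨t, rfl⟩; exact hPmem t
    · intro hx; exact hPsurj x hx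
  -- (a) every column is in the span of the pivot columns at most it
  have hcol : ∀ j : Fin n, colA j ∈ Submodule.span k (colA '' {x | x ∈ Pv ∧ x ≤ j}) := by
    have key : ∀ N : ℕ, ∀ j : Fin n, j.val < N →
        colA j ∈ Submodule.span k (colA '' {x | x ∈ Pv ∧ x ≤ j}) := by
      intro N
      induction N with
      | zero => intro j hj; omega
      | succ N ih =>
        intro j hj
        by_cases hjPv : j ∈ Pv
        · exact subset_span ⟨j, ⟨hjPv, le_rfl⟩, rfl⟩
        · have hsp : colA j ∈ Submodule.span k (colA '' {x | x < j}) := by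
            rw [hPv] at hjPv
            simp only [Finset.mem_filter, Finset.mem_univ, true_and, not_not] at hjPv
            exact hjPv
          refine Submodule.span_le.mpr ?_ hsp
          rintro _ ⟨x, hx, rfl⟩
          have hx' : x.val < N := by
            have := hx.out
            omega
          refine Submodule.span_le.mpr ?_ (ih x hx')
          rintro _ ⟨y, hy, rfl⟩
          apply subset_span
          exact ⟨y, ⟨hy.1, le_trans hy.2 (le_of_lt hx)⟩, rfl⟩
    intro j
    exact key n j j.isLt
  -- (b) the pivot columns are linearly independent
  have hPli : LinearIndependent k (fun t : Fin r => colA (P t)) := by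
    rw [Fintype.linearIndependent_iff]
    intro c hc
    by_contra hne
    push_neg at hne
    obtain ⟨t0, ht0⟩ := hne
    set F := Finset.univ.filter (fun t => c t ≠ 0) with hF
    have hFne : F.Nonempty := ⟨t0, by simp [hF, ht0]⟩
    set t' := F.max' hFne with ht'
    have hct' : c t' ≠ 0 := by
      have := F.max'_mem hFne
      simp [hF] at this
      exact this
    have hmax : ∀ t ∈ F, t ≤ t' := fun t ht => F.le_max' t ht
    apply absurd (hPmem t')
    rw [hPv]
    simp only [Finset.mem_filter, Finset.mem_univ, true_and, not_not]
    -- colA (P t') lies in the span of strictly earlier columns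
    have hsum : colA (P t') =
        ∑ t ∈ Finset.univ.erase t', (-(c t) / c t') • colA (P t) := by
      funext i
      have h2 := congrFun hc i
      simp only [Finset.sum_apply, Pi.smul_apply, smul_eq_mul, Pi.zero_apply] at h2
      rw [← Finset.add_sum_erase _ _ (Finset.mem_univ t')] at h2
      simp only [Finset.sum_apply, Pi.smul_apply, smul_eq_mul]
      have h3 : ∑ t ∈ Finset.univ.erase t', -c t / c t' * colA (P t) i
          = (∑ t ∈ Finset.univ.erase t', -(c t * colA (P t) i)) / c t' := by
        rw [Finset.sum_div]
        exact Finset.sum_congr rfl fun t _ => by ring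
      rw [h3, Finset.sum_neg_distrib]
      have h4 : ∑ t ∈ Finset.univ.erase t', c t * colA (P t) i = -(c t' * colA (P t') i) := by
        linear_combination h2
      rw [h4, neg_neg, mul_div_cancel_left₀ _ hct']
    rw [hsum]
    apply Submodule.sum_mem
    intro t ht
    by_cases hct : c t = 0
    · rw [hct]
      simp
    · apply Submodule.smul_mem
      apply subset_span
      refine ⟨P t, ?_, rfl⟩
      have htF : t ∈ F := by simp [hF, hct]
      have hlt : t < t' := lt_of_le_of_ne (hmax t htF) (Finset.ne_of_mem_erase ht)
      exact hPmono hlt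
  -- helper: a minor with more columns than the pivot count vanishes
  have minor_zero : ∀ (p q : ℕ), p < q → ∀ (v : Fin p → Fin m → k)
      (f : Fin q → Fin m) (g : Fin q → Fin n),
      (∀ b, colA (g b) ∈ Submodule.span k (Set.range v)) →
      (Matrix.of fun a b => A (f a, g b)).det = 0 := by
    intro p q hpq v f g hw
    have h := key_span_minor hpq v (fun b => colA (g b)) hw f
    rw [← Matrix.det_transpose]
    exact h
  refine ⟨r, ?_⟩
  obtain ⟨g0, hg0⟩ := key_li_minor hPli
  refine ⟨g0, P, ?_, ?_, ?_⟩
  · -- det condition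
    intro hdet
    apply hg0
    rw [← Matrix.det_transpose] at hdet
    exact hdet
  · -- C3
    intro f g
    apply minor_zero r (r+1) (by omega) (fun t => colA (P t)) f g
    intro b
    refine Submodule.span_le.mpr ?_ (hcol (g b))
    rintro _ ⟨x, hx, rfl⟩
    apply subset_span
    obtain ⟨t, rfl⟩ := hPsurj x hx.1
    exact ⟨t, rfl⟩
  · -- C4
    intro j hjP f g hgle
    have hcard : Fintype.card {t : Fin r // P t ≤ j} = pcount P j := by
      rw [pcount, Fintype.card_subtype]
    let e : {t : Fin r // P t ≤ j} ≃ Fin (pcount P j) := Fintype.equivFinOfCardEq hcard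
    apply minor_zero (pcount P j) (pcount P j + 1) (by omega)
      (fun a => colA (P (e.symm a))) f g
    intro b
    refine Submodule.span_le.mpr ?_ (hcol (g b))
    rintro _ ⟨x, hx, rfl⟩
    apply subset_span
    obtain ⟨t, rfl⟩ := hPsurj x hx.1
    have htle : P t ≤ j := le_trans hx.2 (hgle b)
    exact ⟨e ⟨t, htle⟩, by simp⟩

lemma Cond.prop1 (hC : Cond A I P) (j : Fin n) :
    Rmat A I P j j = 0 ∨ Rmat A I P j j = 1 := by
  by_cases hj : j ∈ Set.range P
  · obtain ⟨t, rfl⟩ := hj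
    right
    rw [hC.Rmat_pivot t, hC.B_pivot t t, if_pos rfl]
  · left; exact Rmat_nonpivot hj j A I

lemma Cond.prop2 (hC : Cond A I P) (j : Fin n) (h0 : Rmat A I P j j = 0) (i : Fin n) :
    Rmat A I P j i = 0 := by
  by_cases hj : j ∈ Set.range P
  · exfalso
    obtain ⟨t, rfl⟩ := hj
    rw [hC.Rmat_pivot t, hC.B_pivot t t, if_pos rfl] at h0
    exact one_ne_zero h0
  · exact Rmat_nonpivot hj i A I

lemma Cond.mem_range_of_diag_one (hC : Cond A I P) {j : Fin n} (h1 : Rmat A I P j j = 1) :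
    j ∈ Set.range P := by
  by_contra hj
  rw [Rmat_nonpivot hj j A I] at h1
  exact one_ne_zero h1.symm

lemma Cond.prop3 (hC : Cond A I P) (j : Fin n) (h1 : Rmat A I P j j = 1)
    (i : Fin n) (hij : i < j) : Rmat A I P j i = 0 := by
  obtain ⟨t, rfl⟩ := hC.mem_range_of_diag_one h1
  rw [hC.Rmat_pivot t]
  exact hC.B_echelon t i hij

lemma Cond.prop4 (hC : Cond A I P) (j : Fin n) (h1 : Rmat A I P j j = 1)
    (i : Fin n) (hij : i ≠ j) : Rmat A I P i j = 0 := by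
  obtain ⟨t, ht⟩ := hC.mem_range_of_diag_one h1
  by_cases hi : i ∈ Set.range P
  · obtain ⟨u, rfl⟩ := hi
    rw [hC.Rmat_pivot u, ← ht, hC.B_pivot u t, if_neg]
    intro h
    exact hij (by rw [h, ht])
  · exact Rmat_nonpivot hi j A I

lemma Cond.prop5 (hC : Cond A I P) :
    Submodule.span k (Set.range (Rmat A I P)) =
      Submodule.span k (Set.range fun i => Arow A i) := by
  apply le_antisymm
  · refine Submodule.span_le.mpr (Set.range_subset_iff.mpr fun i => ?_)
    by_cases hi : i ∈ Set.range P
    · obtain ⟨t, rfl⟩ := hi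
      have : Rmat A I P (P t) = Bmat A I P t := funext fun j => hC.Rmat_pivot t j
      rw [this, ← hC.span_rows_eq]
      exact hC.B_row_mem t
    · have : Rmat A I P i = 0 := funext fun j => Rmat_nonpivot hi j A I
      rw [this]
      exact Submodule.zero_mem _
  · rw [← hC.spanB_eq]
    refine Submodule.span_le.mpr (Set.range_subset_iff.mpr fun t => ?_)
    have : Bmat A I P t = Rmat A I P (P t) := (funext fun j => hC.Rmat_pivot t j).symm
    rw [this]
    exact subset_span ⟨P t, rfl⟩

/-- Cramer-rule characterisation of the entries of `Bmat`. -/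
lemma Cond.val_eq (hC : Cond A I P) (t : Fin r) (j : Fin n) :
    Bmat A I P t j * (pivM A I P).det =
      (Matrix.of fun a b => if b = t then A (I a, j) else A (I a, P b)).det := by
  classical
  set M := pivM A I P with hM
  set colN : Fin r → k := fun a => A (I a, j) with hcolN
  set colB : Fin r → k := fun u => Bmat A I P u j with hcolB
  have h1 : (Matrix.of fun a b => if b = t then A (I a, j) else A (I a, P b)) =
      M.updateCol t colN := by
    ext a b
    rw [Matrix.updateCol_apply]
    by_cases h : b = t <;> simp [h, hM, pivM, hcolN]
  rw [h1, ← Matrix.cramer_apply]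
  have hmv : M *ᵥ colB = colN := by
    have hMB : M * Bmat A I P = Matrix.of fun a j' => A (I a, j') := by
      rw [Bmat, ← Matrix.mul_assoc, Matrix.mul_nonsing_inv _ (isUnit_iff_ne_zero.mpr hC.1),
        Matrix.one_mul]
    funext a
    have := congrFun (congrFun hMB a) j
    simpa [Matrix.mulVec, Matrix.mul_apply, dotProduct, hcolB, hcolN] using this
  have h2 : M *ᵥ (Matrix.cramer M colN - M.det • colB) = 0 := by
    rw [Matrix.mulVec_sub, Matrix.mulVec_cramer, Matrix.mulVec_smul, hmv, sub_self]
  have h3 := Matrix.eq_zero_of_mulVec_eq_zero hC.1 h2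
  have h4 := congrFun h3 t
  simp only [Pi.sub_apply, Pi.smul_apply, smul_eq_mul, Pi.zero_apply, sub_eq_zero] at h4
  rw [h4, hcolB]
  ring

lemma Cond.r_le_m (hC : Cond A I P) : r ≤ m := by
  have hinj : Function.Injective I := by
    intro a a' haa'
    by_contra hne
    exact hC.1 (Matrix.det_zero_of_row_eq hne (funext fun b => by simp [pivM, haa']))
  simpa using Fintype.card_le_of_injective I hinj

/-- The index type for the strata. -/
def Datum (m n : ℕ) : Type := Σ r : Fin (m+1), (Fin r.1 → Fin m) × (Fin r.1 → Fin n)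

noncomputable instance : Fintype (Datum m n) := by
  unfold Datum
  classical
  infer_instance

lemma exists_cond_datum (A : Fin m × Fin n → k) :
    ∃ d : Datum m n, Cond A d.2.1 d.2.2 := by
  obtain ⟨r, I, P, hC⟩ := exists_cond A
  exact ⟨⟨⟨r, Nat.lt_succ_of_le hC.r_le_m⟩, I, P⟩, hC⟩

noncomputable def theDatum (A : Fin m × Fin n → k) : Datum m n :=
  (exists_cond_datum A).choose

lemma theDatum_cond (A : Fin m × Fin n → k) : Cond A (theDatum A).2.1 (theDatum A).2.2 :=
  (exists_cond_datum A).choose_spec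

noncomputable def rho (i j : Fin n) (A : Fin m × Fin n → k) : k :=
  Rmat A (theDatum A).2.1 (theDatum A).2.2 i j

-- Polynomial encodings
noncomputable def detPoly {q : ℕ} (f : Fin q → Fin m) (g : Fin q → Fin n) :
    MvPolynomial (Option (Fin m × Fin n)) k :=
  (Matrix.of fun a b => (X (some (f a, g b)) : MvPolynomial (Option (Fin m × Fin n)) k)).det

lemma eval_detPoly (x : Option (Fin m × Fin n) → k) {q : ℕ} (f : Fin q → Fin m)
    (g : Fin q → Fin n) :
    MvPolynomial.eval x (detPoly f g) = (Matrix.of fun a b => x (some (f a, g b))).det := by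
  rw [detPoly, RingHom.map_det]
  congr 1
  ext a b
  simp [RingHom.mapMatrix_apply, Matrix.map_apply]

noncomputable def updDetPoly (I : Fin r → Fin m) (P : Fin r → Fin n) (t : Fin r) (j : Fin n) :
    MvPolynomial (Option (Fin m × Fin n)) k :=
  (Matrix.of fun a b => if b = t then (X (some (I a, j)) : MvPolynomial (Option (Fin m × Fin n)) k)
    else X (some (I a, P b))).det

lemma eval_updDetPoly (x : Option (Fin m × Fin n) → k) (I : Fin r → Fin m) (P : Fin r → Fin n)
    (t : Fin r) (j : Fin n) :
    MvPolynomial.eval x (updDetPoly I P t j) =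
      (Matrix.of fun a b => if b = t then x (some (I a, j)) else x (some (I a, P b))).det := by
  rw [updDetPoly, RingHom.map_det]
  congr 1
  ext a b
  by_cases h : b = t <;> simp [RingHom.mapMatrix_apply, Matrix.map_apply, h]

noncomputable def valPoly (i j : Fin n) (I : Fin r → Fin m) (P : Fin r → Fin n) :
    MvPolynomial (Option (Fin m × Fin n)) k :=
  if h : ∃ t, P t = i then
    X none * detPoly I P - updDetPoly I P h.choose j
  else X none

-- The pieces
def Upiece (d : Datum m n) : Set (Option (Fin m × Fin n) → k) :=
  {x | (pivM (fun p => x (some p)) d.2.1 d.2.2).det ≠ 0}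

def Zpiece (i j : Fin n) (d : Datum m n) : Set (Option (Fin m × Fin n) → k) :=
  {x | (∀ (f : Fin (d.1.1+1) → Fin m) (g : Fin (d.1.1+1) → Fin n),
          (Matrix.of fun a b => x (some (f a, g b))).det = 0) ∧
       (∀ j' : Fin n, j' ∉ Set.range d.2.2 →
          ∀ (f : Fin (pcount d.2.2 j' + 1) → Fin m) (g : Fin (pcount d.2.2 j' + 1) → Fin n),
            (∀ b, g b ≤ j') → (Matrix.of fun a b => x (some (f a, g b))).det = 0) ∧
       MvPolynomial.eval x (valPoly i j d.2.1 d.2.2) = 0}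

lemma zopen_Upiece (d : Datum m n) : ZariskiOpen (Upiece (k := k) d) := by
  refine ⟨{detPoly d.2.1 d.2.2}, ?_⟩
  ext x
  simp only [Set.mem_compl_iff, Upiece, Set.mem_setOf_eq, not_not, Set.mem_singleton_iff,
    forall_eq]
  rw [eval_detPoly]
  rfl

lemma zclosed_Zpiece (i j : Fin n) (d : Datum m n) : ZariskiClosed (Zpiece (k := k) i j d) := by
  classical
  refine ⟨(Set.range fun fg : (Fin (d.1.1+1) → Fin m) × (Fin (d.1.1+1) → Fin n) =>
      detPoly (k := k) fg.1 fg.2) ∪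
    {p | ∃ j' : Fin n, ∃ hj' : j' ∉ Set.range d.2.2,
      ∃ f : Fin (pcount d.2.2 j' + 1) → Fin m, ∃ g : Fin (pcount d.2.2 j' + 1) → Fin n,
      (∀ b, g b ≤ j') ∧ p = detPoly f g} ∪
    {valPoly i j d.2.1 d.2.2}, ?_⟩
  ext x
  constructor
  · rintro ⟨h3, h4, hval⟩ p hp
    rcases hp with (⟨⟨f, g⟩, rfl⟩ | ⟨j', hj', f, g, hgle, rfl⟩) | rfl
    · rw [eval_detPoly]; exact h3 f g
    · rw [eval_detPoly]; exact h4 j' hj' f g hgle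
    · exact hval
  · intro h
    refine ⟨?_, ?_, ?_⟩
    · intro f g
      have := h (detPoly f g) (Or.inl (Or.inl ⟨⟨f, g⟩, rfl⟩))
      rwa [eval_detPoly] at this
    · intro j' hj' f g hgle
      have := h (detPoly f g) (Or.inl (Or.inr ⟨j', hj', f, g, hgle, rfl⟩))
      rwa [eval_detPoly] at this
    · exact h _ (Or.inr rfl)

/-- On a stratum where `Cond` holds, the value equation pins down the entry of `Rmat`. -/
lemma val_eq_iff (x : Option (Fin m × Fin n) → k) (i j : Fin n)
    (hC : Cond (fun p => x (some p)) I P) :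
    MvPolynomial.eval x (valPoly i j I P) = 0 ↔
      x none = Rmat (fun p => x (some p)) I P i j := by
  set A := fun p => x (some p) with hA
  rw [valPoly, Rmat]
  by_cases h : ∃ t, P t = i
  · rw [dif_pos h, dif_pos h]
    rw [map_sub, _root_.map_mul, eval_X, eval_detPoly, eval_updDetPoly]
    have hv := hC.val_eq h.choose j
    constructor
    · intro he
      rw [sub_eq_zero] at he
      have : x none * (pivM A I P).det = Bmat A I P h.choose j * (pivM A I P).det := by
        rw [hv]; exact he
      exact mul_right_cancel₀ hC.1 this
    · intro he
      rw [sub_eq_zero, he]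
      exact hv
  · rw [dif_neg h, dif_neg h, eval_X]

lemma graph_eq (i j : Fin n) :
    {x : Option (Fin m × Fin n) → k | rho i j (fun p => x (some p)) = x none} =
      ⋃ d : Datum m n, Upiece d ∩ Zpiece i j d := by
  ext x
  set A := fun p => x (some p) with hA
  constructor
  · intro hx
    refine Set.mem_iUnion.mpr ⟨theDatum A, ?_, ?_, ?_, ?_⟩
    · exact (theDatum_cond A).1
    · exact (theDatum_cond A).2.1
    · exact (theDatum_cond A).2.2
    · rw [val_eq_iff x i j (theDatum_cond A)]
      exact hx.symm
  · intro hx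
    obtain ⟨d, hU, hC3, hC4, hval⟩ := Set.mem_iUnion.mp hx
    have hC : Cond A d.2.1 d.2.2 := ⟨hU, hC3, hC4⟩
    rw [val_eq_iff x i j hC] at hval
    have := cond_unique (theDatum_cond A) hC
    show rho i j A = x none
    rw [rho, this, hval]

lemma constructible_graph (i j : Fin n) :
    ZariskiConstructible
      {x : Option (Fin m × Fin n) → k | rho i j (fun p => x (some p)) = x none} := by
  classical
  refine ⟨Fintype.card (Datum m n),
    fun t => Upiece ((Fintype.equivFin (Datum m n)).symm t),
    fun t => Zpiece i j ((Fintype.equivFin (Datum m n)).symm t),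
    fun t => zopen_Upiece _, fun t => zclosed_Zpiece i j _, ?_⟩
  rw [graph_eq i j]
  ext x
  simp only [Set.mem_iUnion]
  constructor
  · rintro ⟨d, hd⟩
    exact ⟨Fintype.equivFin (Datum m n) d, by simpa using hd⟩
  · rintro ⟨t, ht⟩
    exact ⟨(Fintype.equivFin (Datum m n)).symm t, ht⟩

end Statement11Aux

theorem statement11 (k : Type*) [Field k] [IsAlgClosed k] (m n : ℕ)
    (hm : 0 < m) (hn : 0 < n) :
    ∃ ρ : Fin n → Fin n → ((Fin m × Fin n → k) → k),
      -- each `ρ_{ij}` has constructible graph in `k^{mn+1}`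
      (∀ i j, ZariskiConstructible
        {x : Option (Fin m × Fin n) → k | ρ i j (fun p => x (some p)) = x none}) ∧
      ∀ A : Fin m × Fin n → k,
        -- (i) every diagonal entry of `R(A)` is 0 or 1
        (∀ j, ρ j j A = 0 ∨ ρ j j A = 1) ∧
        -- (ii) if `ρ_jj(A) = 0` then the `j`-th row of `R(A)` is zero
        (∀ j, ρ j j A = 0 → ∀ i, ρ j i A = 0) ∧
        -- (iii) if `ρ_jj(A) = 1` then `ρ_ji(A) = 0` for all `i < j`
        (∀ j, ρ j j A = 1 → ∀ i, i < j → ρ j i A = 0) ∧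
        -- (iv) if `ρ_jj(A) = 1` then `ρ_ij(A) = 0` for all `i ≠ j`
        (∀ j, ρ j j A = 1 → ∀ i, i ≠ j → ρ i j A = 0) ∧
        -- (v) the rows of `R(A)` span the same subspace of `k^n` as the rows of `A`
        Submodule.span k (Set.range fun i : Fin n => fun j : Fin n => ρ i j A) =
          Submodule.span k (Set.range fun i : Fin m => fun j : Fin n => A (i, j)) := by
  classical
  refine ⟨fun i j A => rho i j A, fun i j => constructible_graph i j, fun A => ?_⟩
  have hC := theDatum_cond A
  exact ⟨hC.prop1, hC.prop2, hC.prop3, hC.prop4, hC.prop5⟩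
end
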